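/- For every natural number n there exists a set S of n points in ℝ², each with rational coordinates and lying on the unit circle, such that no point of the open unit disc lies on three pairwise distinct closed segments each of which joins two distinct points of S. (In particular, since the points lie on a circle, S is in convex position and no three points of S are collinear.) -/

import Mathlib

/-- A point of the plane is rational if both of its coordinates are rational. -/
def IsRatPt (p : EuclideanSpace ℝ (Fin 2)) : Prop :=
  (∃ q : ℚ, p 0 = (q : ℝ)) ∧ (∃ q : ℚ, p 1 = (q : ℝ))

noncomputable section

open Set

local notation "E2" => EuclideanSpace ℝ (Fin 2)

private noncomputable instance : DecidableEq (EuclideanSpace ℝ (Fin 2)) := Classical.decEq _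

private lemma seg_sub_line (a b : E2) : segment ℝ a b ⊆ (line[ℝ, a, b] : Set _) :=
  (affineSpan ℝ {a, b}).convex.segment_subset (left_mem_affineSpan_pair ℝ a b)
    (right_mem_affineSpan_pair ℝ a b)

/-- Three collinear points on the unit circle: the third equals one of the other two. -/
private lemma sphere_trichotomy {a b c : E2} (ha : ‖a‖ = 1) (hb : ‖b‖ = 1) (hc : ‖c‖ = 1)
    (hcol : Collinear ℝ ({a, b, c} : Set _)) (hab : a ≠ b) : c = a ∨ c = b := by
  obtain ⟨p, v, hvp⟩ := (collinear_iff_exists_forall_eq_smul_vadd _).1 hcol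
  obtain ⟨ta, hA⟩ := hvp a (by simp)
  obtain ⟨tb, hB⟩ := hvp b (by simp)
  obtain ⟨tc, hC⟩ := hvp c (by simp)
  have key : ∀ (t : ℝ) (x : E2), x = t • v +ᵥ p → ‖x‖ = 1 →
      t ^ 2 * ‖v‖ ^ 2 + 2 * t * (inner ℝ v p : ℝ) + ‖p‖ ^ 2 = 1 := by
    intro t x hx hnx
    have h1 : ‖t • v + p‖ ^ 2 = 1 := by
      rw [← vadd_eq_add, ← hx, hnx]; norm_num
    rw [norm_add_sq_real, real_inner_smul_left, norm_smul, Real.norm_eq_abs,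
      mul_pow, sq_abs] at h1
    linarith
  have ea := key ta a hA ha
  have eb := key tb b hB hb
  have ec := key tc c hC hc
  have hv : v ≠ 0 := by
    rintro rfl
    exact hab (by rw [hA, hB]; simp)
  have hnv : ‖v‖ ^ 2 ≠ 0 := pow_ne_zero _ (norm_ne_zero_iff.2 hv)
  have htab : ta ≠ tb := by
    rintro rfl
    exact hab (hA.trans hB.symm)
  by_contra hcon
  push_neg at hcon
  have h1 : tc ≠ ta := by rintro rfl; exact hcon.1 (hC.trans hA.symm)
  have h2 : tc ≠ tb := by rintro rfl; exact hcon.2 (hC.trans hB.symm)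
  have f1 : (ta - tc) * (‖v‖ ^ 2 * (ta + tc) + 2 * (inner ℝ v p : ℝ)) = 0 := by
    linear_combination ea - ec
  have f2 : (tb - tc) * (‖v‖ ^ 2 * (tb + tc) + 2 * (inner ℝ v p : ℝ)) = 0 := by
    linear_combination eb - ec
  have g1 := (mul_eq_zero.1 f1).resolve_left (sub_ne_zero.2 (Ne.symm h1))
  have g2 := (mul_eq_zero.1 f2).resolve_left (sub_ne_zero.2 (Ne.symm h2))
  have : ‖v‖ ^ 2 * ta = ‖v‖ ^ 2 * tb := by linear_combination g1 - g2
  exact htab (mul_left_cancel₀ hnv this)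

/-- Two distinct chords of the unit circle intersect in at most one point. -/
private lemma chord_inter_subsingleton {a b c d : E2} (ha : ‖a‖ = 1) (hb : ‖b‖ = 1)
    (hc : ‖c‖ = 1) (hd : ‖d‖ = 1) (hab : a ≠ b) (hcd : c ≠ d)
    (hne : segment ℝ a b ≠ segment ℝ c d) :
    Set.Subsingleton (segment ℝ a b ∩ segment ℝ c d) := by
  intro x hx y hy
  by_contra hxy
  have h1 : Collinear ℝ ({x, y, a, b} : Set _) :=
    collinear_insert_insert_of_mem_affineSpan_pair (seg_sub_line a b hx.1) (seg_sub_line a b hy.1)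
  have h2 : Collinear ℝ ({x, y, c, d} : Set _) :=
    collinear_insert_insert_of_mem_affineSpan_pair (seg_sub_line c d hx.2) (seg_sub_line c d hy.2)
  have la : a ∈ line[ℝ, x, y] :=
    h1.mem_affineSpan_of_mem_of_ne (by simp) (by simp) (by simp) hxy
  have lb : b ∈ line[ℝ, x, y] :=
    h1.mem_affineSpan_of_mem_of_ne (by simp) (by simp) (by simp) hxy
  have lc : c ∈ line[ℝ, x, y] :=
    h2.mem_affineSpan_of_mem_of_ne (by simp) (by simp) (by simp) hxy
  have ld : d ∈ line[ℝ, x, y] :=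
    h2.mem_affineSpan_of_mem_of_ne (by simp) (by simp) (by simp) hxy
  have hcab : c = a ∨ c = b :=
    sphere_trichotomy ha hb hc (collinear_triple_of_mem_affineSpan_pair la lb lc) hab
  have hdab : d = a ∨ d = b :=
    sphere_trichotomy ha hb hd (collinear_triple_of_mem_affineSpan_pair la lb ld) hab
  rcases hcab with rfl | rfl <;> rcases hdab with rfl | rfl <;>
    first
      | exact hcd rfl
      | exact hne rfl
      | exact hne (segment_symm ℝ _ _)


private def ratPt (t : ℚ) : E2 :=
  (WithLp.equiv 2 (Fin 2 → ℝ)).symm ![(1 - (t : ℝ) ^ 2) / (1 + (t : ℝ) ^ 2),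
    2 * (t : ℝ) / (1 + (t : ℝ) ^ 2)]

private lemma ratPt_apply_zero (t : ℚ) :
    ratPt t 0 = (1 - (t : ℝ) ^ 2) / (1 + (t : ℝ) ^ 2) := rfl

private lemma ratPt_apply_one (t : ℚ) :
    ratPt t 1 = 2 * (t : ℝ) / (1 + (t : ℝ) ^ 2) := rfl

private lemma ratPt_mem (t : ℚ) : IsRatPt (ratPt t) ∧ ‖ratPt t‖ = 1 := by
  have ht : (1 : ℝ) + (t : ℝ) ^ 2 ≠ 0 := by positivity
  refine ⟨⟨⟨(1 - t ^ 2) / (1 + t ^ 2), by rw [ratPt_apply_zero]; push_cast; ring⟩,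
    ⟨2 * t / (1 + t ^ 2), by rw [ratPt_apply_one]; push_cast; ring⟩⟩, ?_⟩
  rw [EuclideanSpace.norm_eq]
  have : ∑ i, ‖ratPt t i‖ ^ 2 = 1 := by
    rw [Fin.sum_univ_two, ratPt_apply_zero, ratPt_apply_one, Real.norm_eq_abs,
      Real.norm_eq_abs, sq_abs, sq_abs]
    field_simp
    ring
  rw [this, Real.sqrt_one]

private lemma ratPt_injective : Function.Injective ratPt := by
  intro a b h
  have h0 : ratPt a 0 = ratPt b 0 := by rw [h]
  have h1 : ratPt a 1 = ratPt b 1 := by rw [h]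
  rw [ratPt_apply_zero, ratPt_apply_zero] at h0
  rw [ratPt_apply_one, ratPt_apply_one] at h1
  set A := (a : ℝ); set B := (b : ℝ)
  have hA : (1 : ℝ) + A ^ 2 ≠ 0 := by positivity
  have hB : (1 : ℝ) + B ^ 2 ≠ 0 := by positivity
  rw [div_eq_div_iff hA hB] at h0 h1
  have hsq : A ^ 2 = B ^ 2 := by linear_combination (-1/2) * h0
  have key : (A - B) * (1 - A * B) = 0 := by linear_combination (1/2) * h1
  have hAB : A = B := by
    rcases mul_eq_zero.1 key with h' | h'
    · linarith
    · have hab1 : A * B = 1 := by linarith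
      have h5 : (A ^ 2 - 1) * (A ^ 2 + 1) = 0 := by
        linear_combination A ^ 2 * hsq + (A * B + 1) * hab1
      have h6 : A ^ 2 = 1 := by
        rcases mul_eq_zero.1 h5 with h'' | h''
        · linarith
        · nlinarith [sq_nonneg A]
      linear_combination B * h6 - A * hab1
  have : (a : ℝ) = (b : ℝ) := hAB
  exact_mod_cast this

private lemma ratPts_infinite : Set.Infinite {p : E2 | IsRatPt p ∧ ‖p‖ = 1} :=
  Set.infinite_of_injective_forall_mem ratPt_injective ratPt_mem

/-- The "good" property: no three pairwise distinct chords concurrent inside the disc. -/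
private def Good (S : Finset E2) : Prop :=
  ∀ x : EuclideanSpace ℝ (Fin 2), ‖x‖ < 1 →
    ¬ ∃ p₁ q₁ p₂ q₂ p₃ q₃ : EuclideanSpace ℝ (Fin 2),
        p₁ ∈ S ∧ q₁ ∈ S ∧ p₂ ∈ S ∧ q₂ ∈ S ∧ p₃ ∈ S ∧ q₃ ∈ S ∧
        p₁ ≠ q₁ ∧ p₂ ≠ q₂ ∧ p₃ ≠ q₃ ∧
        segment ℝ p₁ q₁ ≠ segment ℝ p₂ q₂ ∧
        segment ℝ p₁ q₁ ≠ segment ℝ p₃ q₃ ∧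
        segment ℝ p₂ q₂ ≠ segment ℝ p₃ q₃ ∧
        x ∈ segment ℝ p₁ q₁ ∧ x ∈ segment ℝ p₂ q₂ ∧ x ∈ segment ℝ p₃ q₃

/-- Interior points lying on two distinct chords of `S`. -/
private def doublePts (S : Finset E2) : Set E2 :=
  {x | ‖x‖ < 1 ∧ ∃ a ∈ S, ∃ b ∈ S, ∃ c ∈ S, ∃ d ∈ S,
    a ≠ b ∧ c ≠ d ∧ segment ℝ a b ≠ segment ℝ c d ∧
    x ∈ segment ℝ a b ∧ x ∈ segment ℝ c d}

/-- Circle points whose chord to some point of `S` passes through a double point. -/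
private def badPts (S : Finset E2) : Set E2 :=
  {p | ‖p‖ = 1 ∧ ∃ x ∈ doublePts S, ∃ q ∈ S, x ∈ segment ℝ p q}

private lemma doublePts_finite (S : Finset E2) (hS : ∀ p ∈ S, ‖p‖ = 1) :
    (doublePts S).Finite := by
  have hsub : doublePts S ⊆ ⋃ a ∈ (S : Set E2), ⋃ b ∈ (S : Set E2), ⋃ c ∈ (S : Set E2),
      ⋃ d ∈ (S : Set E2),
      {x : E2 | a ≠ b ∧ c ≠ d ∧ segment ℝ a b ≠ segment ℝ c d ∧
        x ∈ segment ℝ a b ∧ x ∈ segment ℝ c d} := by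
    rintro x ⟨-, a, ha, b, hb, c, hc, d, hd, h⟩
    exact Set.mem_biUnion (Finset.mem_coe.2 ha) (Set.mem_biUnion (Finset.mem_coe.2 hb)
      (Set.mem_biUnion (Finset.mem_coe.2 hc) (Set.mem_biUnion (Finset.mem_coe.2 hd) h)))
  refine Set.Finite.subset ?_ hsub
  refine S.finite_toSet.biUnion fun a ha => S.finite_toSet.biUnion fun b hb =>
    S.finite_toSet.biUnion fun c hc => S.finite_toSet.biUnion fun d hd => ?_
  refine Set.Subsingleton.finite fun x hx y hy => ?_
  exact chord_inter_subsingleton (hS a (Finset.mem_coe.1 ha)) (hS b (Finset.mem_coe.1 hb))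
    (hS c (Finset.mem_coe.1 hc)) (hS d (Finset.mem_coe.1 hd))
    hx.1 hx.2.1 hx.2.2.1 ⟨hx.2.2.2.1, hx.2.2.2.2⟩ ⟨hy.2.2.2.1, hy.2.2.2.2⟩

private lemma badPts_finite (S : Finset E2) (hS : ∀ p ∈ S, ‖p‖ = 1) :
    (badPts S).Finite := by
  have hsub : badPts S ⊆ ⋃ x ∈ doublePts S, ⋃ q ∈ (S : Set E2),
      {p : E2 | ‖p‖ = 1 ∧ x ∈ segment ℝ p q} := by
    rintro p ⟨hp, x, hxX, q, hq, hseg⟩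
    exact Set.mem_biUnion hxX (Set.mem_biUnion (Finset.mem_coe.2 hq) ⟨hp, hseg⟩)
  refine Set.Finite.subset ?_ hsub
  refine (doublePts_finite S hS).biUnion fun x hxX => S.finite_toSet.biUnion fun q hq => ?_
  have hqn : ‖q‖ = 1 := hS q (Finset.mem_coe.1 hq)
  have hxq : x ≠ q := by
    intro h
    have := hxX.1
    rw [h, hqn] at this
    exact lt_irrefl _ this
  have hsub2 : {p : E2 | ‖p‖ = 1 ∧ x ∈ segment ℝ p q} ⊆
      insert q ({p : E2 | ‖p‖ = 1 ∧ x ∈ segment ℝ p q} \ {q}) := by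
    intro p hp
    by_cases h : p = q
    · exact Set.mem_insert_iff.2 (Or.inl h)
    · exact Set.mem_insert_iff.2 (Or.inr ⟨hp, h⟩)
  refine Set.Finite.subset (Set.Finite.insert q (Set.Subsingleton.finite ?_)) hsub2
  rintro p₁ ⟨⟨hn1, hs1⟩, hq1⟩ p₂ ⟨⟨hn2, hs2⟩, hq2⟩
  by_contra hne
  have c1 : Collinear ℝ ({x, p₁, q} : Set _) :=
    collinear_insert_of_mem_affineSpan_pair (seg_sub_line _ _ hs1)
  have c2 : Collinear ℝ ({x, p₂, q} : Set _) :=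
    collinear_insert_of_mem_affineSpan_pair (seg_sub_line _ _ hs2)
  have l1 : p₁ ∈ line[ℝ, q, x] :=
    c1.mem_affineSpan_of_mem_of_ne (by simp) (by simp) (by simp) (Ne.symm hxq)
  have l2 : p₂ ∈ line[ℝ, q, x] :=
    c2.mem_affineSpan_of_mem_of_ne (by simp) (by simp) (by simp) (Ne.symm hxq)
  have lq : q ∈ line[ℝ, q, x] := left_mem_affineSpan_pair ℝ q x
  rcases sphere_trichotomy hn1 hn2 hqn
      (collinear_triple_of_mem_affineSpan_pair l1 l2 lq) hne with h | h
  · exact hq1 (Set.mem_singleton_iff.2 h.symm)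
  · exact hq2 (Set.mem_singleton_iff.2 h.symm)

private lemma step (S : Finset E2) (hS : ∀ p ∈ S, ‖p‖ = 1) (hP : Good S) :
    ∃ p : E2, p ∉ S ∧ IsRatPt p ∧ ‖p‖ = 1 ∧
      Good (insert p S) := by
  classical
  obtain ⟨p, hpR, hpBad⟩ : ∃ p, p ∈ {p : E2 | IsRatPt p ∧ ‖p‖ = 1} ∧ p ∉ badPts S ∪ ↑S := by
    obtain ⟨p, hp⟩ :=
      (ratPts_infinite.diff ((badPts_finite S hS).union S.finite_toSet)).nonempty
    exact ⟨p, hp.1, hp.2⟩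
  have hpS : p ∉ S := fun h => hpBad (Or.inr (Finset.mem_coe.2 h))
  have hpnorm : ‖p‖ = 1 := hpR.2
  refine ⟨p, hpS, hpR.1, hpnorm, ?_⟩
  intro x hx hcon
  obtain ⟨p₁, q₁, p₂, q₂, p₃, q₃, m1, m2, m3, m4, m5, m6, ne1, ne2, ne3,
    d12, d13, d23, s1, s2, s3⟩ := hcon
  -- classify each chord
  have cls : ∀ a b : E2, a ∈ insert p S → b ∈ insert p S → a ≠ b →
      (a ∈ S ∧ b ∈ S) ∨ ∃ r ∈ S, segment ℝ a b = segment ℝ p r := by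
    intro a b haM hbM hab
    rcases Finset.mem_insert.1 haM with rfl | haS
    · rcases Finset.mem_insert.1 hbM with rfl | hbS
      · exact absurd rfl hab
      · exact Or.inr ⟨b, hbS, rfl⟩
    · rcases Finset.mem_insert.1 hbM with rfl | hbS
      · exact Or.inr ⟨a, haS, segment_symm ℝ a b⟩
      · exact Or.inl ⟨haS, hbS⟩
  -- two distinct chords through p cannot both contain x
  have hxp : x ≠ p := by
    intro h
    rw [h, hpnorm] at hx
    exact lt_irrefl _ hx
  have twoP : ∀ r s : E2, r ∈ S → s ∈ S → segment ℝ p r ≠ segment ℝ p s →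
      x ∈ segment ℝ p r → x ∈ segment ℝ p s → False := by
    intro r s hr hs hne hxr hxs
    have c1 : Collinear ℝ ({x, p, r} : Set _) :=
      collinear_insert_of_mem_affineSpan_pair (seg_sub_line _ _ hxr)
    have c2 : Collinear ℝ ({x, p, s} : Set _) :=
      collinear_insert_of_mem_affineSpan_pair (seg_sub_line _ _ hxs)
    have lr : r ∈ line[ℝ, p, x] :=
      c1.mem_affineSpan_of_mem_of_ne (by simp) (by simp) (by simp) (Ne.symm hxp)
    have ls : s ∈ line[ℝ, p, x] :=
      c2.mem_affineSpan_of_mem_of_ne (by simp) (by simp) (by simp) (Ne.symm hxp)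
    have lp : p ∈ line[ℝ, p, x] := left_mem_affineSpan_pair ℝ p x
    have hrs : r ≠ s := fun h => hne (by rw [h])
    rcases sphere_trichotomy (hS r hr) (hS s hs) hpnorm
        (collinear_triple_of_mem_affineSpan_pair lr ls lp) hrs with h | h
    · exact hpS (by rw [h]; exact hr)
    · exact hpS (by rw [h]; exact hs)
  -- if two chords lie in S and pass through x, then x is a double point
  have mkX : ∀ a b c d : E2, a ∈ S → b ∈ S → c ∈ S → d ∈ S → a ≠ b → c ≠ d →
      segment ℝ a b ≠ segment ℝ c d → x ∈ segment ℝ a b → x ∈ segment ℝ c d →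
      x ∈ doublePts S :=
    fun a b c d ha hb hc hd h1 h2 h3 h4 h5 =>
      ⟨hx, a, ha, b, hb, c, hc, d, hd, h1, h2, h3, h4, h5⟩
  have mkBad : ∀ r : E2, r ∈ S → x ∈ doublePts S → x ∈ segment ℝ p r → False := by
    intro r hr hxX hxseg
    exact hpBad (Or.inl ⟨hpnorm, x, hxX, r, hr, hxseg⟩)
  rcases cls p₁ q₁ m1 m2 ne1 with ⟨hA1, hB1⟩ | ⟨r1, hr1, he1⟩ <;>
    rcases cls p₂ q₂ m3 m4 ne2 with ⟨hA2, hB2⟩ | ⟨r2, hr2, he2⟩ <;>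
      rcases cls p₃ q₃ m5 m6 ne3 with ⟨hA3, hB3⟩ | ⟨r3, hr3, he3⟩
  · exact hP x hx ⟨p₁, q₁, p₂, q₂, p₃, q₃, hA1, hB1, hA2, hB2, hA3, hB3,
      ne1, ne2, ne3, d12, d13, d23, s1, s2, s3⟩
  · exact mkBad r3 hr3 (mkX p₁ q₁ p₂ q₂ hA1 hB1 hA2 hB2 ne1 ne2 d12 s1 s2) (he3 ▸ s3)
  · exact mkBad r2 hr2 (mkX p₁ q₁ p₃ q₃ hA1 hB1 hA3 hB3 ne1 ne3 d13 s1 s3) (he2 ▸ s2)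
  · exact twoP r2 r3 hr2 hr3 (he2 ▸ he3 ▸ d23) (he2 ▸ s2) (he3 ▸ s3)
  · exact mkBad r1 hr1 (mkX p₂ q₂ p₃ q₃ hA2 hB2 hA3 hB3 ne2 ne3 d23 s2 s3) (he1 ▸ s1)
  · exact twoP r1 r3 hr1 hr3 (he1 ▸ he3 ▸ d13) (he1 ▸ s1) (he3 ▸ s3)
  · exact twoP r1 r2 hr1 hr2 (he1 ▸ he2 ▸ d12) (he1 ▸ s1) (he2 ▸ s2)
  · exact twoP r1 r2 hr1 hr2 (he1 ▸ he2 ▸ d12) (he1 ▸ s1) (he2 ▸ s2)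


/-- For every `n` there are `n` rational points on the unit circle such that no
three pairwise distinct chords are concurrent at a point of the open unit disc. -/
theorem exists_rational_points_no_three_concurrent_chords (n : ℕ) :
    ∃ S : Finset (EuclideanSpace ℝ (Fin 2)),
      S.card = n ∧
      (∀ p ∈ S, IsRatPt p ∧ ‖p‖ = 1) ∧
      ∀ x : EuclideanSpace ℝ (Fin 2), ‖x‖ < 1 →
        ¬ ∃ p₁ q₁ p₂ q₂ p₃ q₃ : EuclideanSpace ℝ (Fin 2),
            p₁ ∈ S ∧ q₁ ∈ S ∧ p₂ ∈ S ∧ q₂ ∈ S ∧ p₃ ∈ S ∧ q₃ ∈ S ∧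
            p₁ ≠ q₁ ∧ p₂ ≠ q₂ ∧ p₃ ≠ q₃ ∧
            segment ℝ p₁ q₁ ≠ segment ℝ p₂ q₂ ∧
            segment ℝ p₁ q₁ ≠ segment ℝ p₃ q₃ ∧
            segment ℝ p₂ q₂ ≠ segment ℝ p₃ q₃ ∧
            x ∈ segment ℝ p₁ q₁ ∧ x ∈ segment ℝ p₂ q₂ ∧ x ∈ segment ℝ p₃ q₃ := by
  induction n with
  | zero =>
    refine ⟨∅, rfl, by simp, ?_⟩
    rintro x hx ⟨p₁, q₁, p₂, q₂, p₃, q₃, h, -⟩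
    simp at h
  | succ n ih =>
    obtain ⟨S, hcard, hmem, hgood⟩ := ih
    obtain ⟨p, hpS, hrat, hnorm, hgood'⟩ := step S (fun q hq => (hmem q hq).2) hgood
    refine ⟨insert p S, ?_, ?_, hgood'⟩
    · rw [Finset.card_insert_of_notMem hpS, hcard]
    · intro q hq
      rcases Finset.mem_insert.1 hq with rfl | hq
      · exact ⟨hrat, hnorm⟩
      · exact hmem q hq

end
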